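/- If char F = d (prime), then the Plücker system ∑_i (N−2i)H_{i,N−i} = 0 for N = 1,…,2d−1 combined with the Plücker relations has, up to scalar, exactly one nonzero solution: H_{0,d} ≠ 0 and all other H_{ij} = 0. Hence exactly one codimension-two subspace of PG(d,F) meets every tangent line of the moment curve, namely the intersection of the hyperplanes [1,0,…,0] and [0,…,0,1]. -/

import Mathlib

open Polynomial

section WronskianAux
variable {F : Type*} [Field F]

noncomputable local instance : GCDMonoid F[X] :=
  letI := Classical.decEq F[X]
  EuclideanDomain.gcdMonoid F[X]

lemma coeff_eq_zero_of_deriv_zero {p : ℕ} [CharP F p]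
    {Q : F[X]} (hQ : derivative Q = 0) {m : ℕ} (hm : ¬ p ∣ m) :
    Q.coeff m = 0 := by
  have hm0 : m ≠ 0 := by rintro rfl; exact hm (dvd_zero p)
  obtain ⟨n, rfl⟩ : ∃ n, m = n + 1 := ⟨m - 1, by omega⟩
  have h := coeff_derivative Q n
  rw [hQ, coeff_zero] at h
  have hcast : ((n : F) + 1) ≠ 0 := by
    have h2 : (((n + 1 : ℕ)) : F) ≠ 0 := by
      rw [Ne, CharP.cast_eq_zero_iff F p]
      exact hm
    simpa using h2
  exact (mul_eq_zero.mp h.symm).resolve_right hcast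

lemma natDegree_deriv_le_char {p : ℕ} (hp : p.Prime) [CharP F p] {W : F[X]}
    (hW : W.natDegree ≤ p) : (derivative W).natDegree ≤ p - 2 := by
  have hp2 := hp.two_le
  refine natDegree_le_iff_coeff_eq_zero.mpr fun m hm => ?_
  rw [coeff_derivative]
  rcases lt_or_ge p (m + 1) with h | h
  · have hz : W.coeff (m + 1) = 0 := coeff_eq_zero_of_natDegree_lt (by omega)
    rw [hz, zero_mul]
  · have hmp : m + 1 = p := by omega
    have hz : ((m : F) + 1) = 0 := by
      have h3 : (((m + 1 : ℕ)) : F) = 0 := by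
        rw [CharP.cast_eq_zero_iff F p]
        simp [hmp]
      simpa using h3
    rw [hz, mul_zero]

lemma wronskian_structure {p : ℕ} (hp : p.Prime) [CharP F p]
    {U W : F[X]} (hU : U.natDegree ≤ p) (hW : W.natDegree ≤ p)
    (hwr : U * derivative W = derivative U * W)
    (hind : ∀ a b : F, a • U = b • W → a = 0 ∧ b = 0) :
    ∀ i : ℕ, 0 < i → i < p → U.coeff i = 0 ∧ W.coeff i = 0 := by
  have hU0 : U ≠ 0 := by
    intro h
    exact one_ne_zero (hind 1 0 (by simp [h])).1
  have hW0 : W ≠ 0 := by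
    intro h
    exact one_ne_zero (hind 0 1 (by simp [h])).2
  set D := GCDMonoid.gcd U W with hD
  have hDne : D ≠ 0 := gcd_ne_zero_of_right hW0
  set U₁ := U / D with hU₁
  set W₁ := W / D with hW₁
  have hUD : D * U₁ = U := EuclideanDomain.mul_div_cancel' hDne (gcd_dvd_left U W)
  have hWD : D * W₁ = W := EuclideanDomain.mul_div_cancel' hDne (gcd_dvd_right U W)
  have hcop : IsCoprime U₁ W₁ := isCoprime_div_gcd_div_gcd hW0
  have hU₁0 : U₁ ≠ 0 := right_ne_zero_of_mul (hUD.symm ▸ hU0)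
  have hW₁0 : W₁ ≠ 0 := right_ne_zero_of_mul (hWD.symm ▸ hW0)
  have hwr1 : U₁ * derivative W₁ = derivative U₁ * W₁ := by
    have expand : D * D * (U₁ * derivative W₁) = D * D * (derivative U₁ * W₁) := by
      have h1 := hwr
      rw [← hUD, ← hWD, derivative_mul, derivative_mul] at h1
      ring_nf at h1 ⊢
      linear_combination h1
    exact mul_left_cancel₀ (mul_ne_zero hDne hDne) expand
  have hU₁' : derivative U₁ = 0 := by
    have hdvd : U₁ ∣ derivative U₁ * W₁ := ⟨derivative W₁, hwr1.symm⟩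
    have hdvd2 : U₁ ∣ derivative U₁ := hcop.dvd_of_dvd_mul_right hdvd
    by_contra hne
    exact absurd (degree_le_of_dvd hdvd2 hne) (not_le.mpr (degree_derivative_lt hU₁0))
  have hW₁' : derivative W₁ = 0 := by
    have hdvd : W₁ ∣ U₁ * derivative W₁ := hwr1 ▸ ⟨derivative U₁, mul_comm _ _⟩
    have hdvd2 : W₁ ∣ derivative W₁ := hcop.symm.dvd_of_dvd_mul_left hdvd
    by_contra hne
    exact absurd (degree_le_of_dvd hdvd2 hne) (not_le.mpr (degree_derivative_lt hW₁0))
  have hdegU : D.natDegree + U₁.natDegree = U.natDegree := by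
    rw [← hUD, natDegree_mul hDne hU₁0]
  have hdegW : D.natDegree + W₁.natDegree = W.natDegree := by
    rw [← hWD, natDegree_mul hDne hW₁0]
  have key : ∀ Q : F[X], Q ≠ 0 → derivative Q = 0 → Q.natDegree ≠ 0 →
      Q.natDegree ≤ p → Q.natDegree = p := by
    intro Q hQ0 hQ' hQd hle
    have hlead : Q.coeff Q.natDegree ≠ 0 := fun h =>
      hQ0 (leadingCoeff_eq_zero.mp h)
    have hdvd : p ∣ Q.natDegree := by
      by_contra hh
      exact hlead (coeff_eq_zero_of_deriv_zero hQ' hh)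
    exact le_antisymm hle (Nat.le_of_dvd (Nat.pos_of_ne_zero hQd) hdvd)
  have hDdeg : D.natDegree = 0 := by
    by_cases hc : U₁.natDegree = 0 ∧ W₁.natDegree = 0
    · exfalso
      obtain ⟨h1, h2⟩ := hc
      obtain ⟨a, ha⟩ : ∃ a, U₁ = C a := ⟨U₁.coeff 0, eq_C_of_natDegree_eq_zero h1⟩
      obtain ⟨b, hb⟩ : ∃ b, W₁ = C b := ⟨W₁.coeff 0, eq_C_of_natDegree_eq_zero h2⟩
      have hprop : b • U = a • W := by
        rw [← hUD, ← hWD, ha, hb, smul_eq_C_mul, smul_eq_C_mul]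
        ring
      obtain ⟨hb0, ha0⟩ := hind b a hprop
      exact hU₁0 (by rw [ha, ha0, map_zero])
    · rcases not_and_or.mp hc with h | h
      · have := key U₁ hU₁0 hU₁' h (by omega)
        omega
      · have := key W₁ hW₁0 hW₁' h (by omega)
        omega
  obtain ⟨c, hc⟩ : ∃ c, D = C c := ⟨D.coeff 0, eq_C_of_natDegree_eq_zero hDdeg⟩
  intro i h0 hip
  have hnd : ¬ p ∣ i := fun hdvd => absurd (Nat.le_of_dvd h0 hdvd) (by omega)
  constructor
  · rw [← hUD, hc, coeff_C_mul, coeff_eq_zero_of_deriv_zero hU₁' hnd, mul_zero]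
  · rw [← hWD, hc, coeff_C_mul, coeff_eq_zero_of_deriv_zero hW₁' hnd, mul_zero]

end WronskianAux

section PolyOfAux
variable {F : Type*} [Field F] {d : ℕ}

/-- The polynomial associated to a linear functional on `Fin (d+1) → F`. -/
noncomputable def polyOf (φ : (Fin (d + 1) → F) →ₗ[F] F) : F[X] :=
  ∑ i : Fin (d + 1), C (φ (Pi.single i 1)) * X ^ (i : ℕ)

lemma polyOf_coeff (φ : (Fin (d + 1) → F) →ₗ[F] F) (i : Fin (d + 1)) :
    (polyOf φ).coeff (i : ℕ) = φ (Pi.single i 1) := by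
  rw [polyOf, finset_sum_coeff]
  rw [Finset.sum_eq_single i]
  · rw [coeff_C_mul_X_pow]
    simp
  · intro j _ hj
    rw [coeff_C_mul_X_pow]
    have : (i : ℕ) ≠ (j : ℕ) := fun h => hj (Fin.val_injective h).symm
    simp [this]
  · intro h
    exact absurd (Finset.mem_univ i) h

lemma polyOf_natDegree (φ : (Fin (d + 1) → F) →ₗ[F] F) :
    (polyOf φ).natDegree ≤ d := by
  refine natDegree_sum_le_of_forall_le _ _ fun i _ => ?_
  refine le_trans (natDegree_C_mul_le _ _) ?_
  rw [natDegree_X_pow]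
  omega
  -- i.val ≤ d

lemma pi_decomp (x : Fin (d + 1) → F) :
    x = ∑ i : Fin (d + 1), x i • (Pi.single i 1 : Fin (d + 1) → F) := by
  funext j
  rw [Finset.sum_apply]
  have h4 : ∀ i : Fin (d + 1), (x i • (Pi.single i 1 : Fin (d + 1) → F)) j
      = if i = j then x i else 0 := by
    intro i
    by_cases h : i = j
    · subst h; simp
    · simp [Pi.single_apply, h]
  rw [Finset.sum_congr rfl fun i _ => h4 i]
  simp

lemma apply_eq_sum (φ : (Fin (d + 1) → F) →ₗ[F] F) (x : Fin (d + 1) → F) :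
    φ x = ∑ i : Fin (d + 1), x i * φ (Pi.single i 1) := by
  conv_lhs => rw [pi_decomp x, map_sum]
  refine Finset.sum_congr rfl fun i _ => ?_
  rw [map_smul, smul_eq_mul]

lemma polyOf_eval (φ : (Fin (d + 1) → F) →ₗ[F] F) (t : F) :
    (polyOf φ).eval t = φ (fun i => t ^ (i : ℕ)) := by
  rw [apply_eq_sum, polyOf, eval_finset_sum]
  refine Finset.sum_congr rfl fun i _ => ?_
  rw [eval_mul, eval_C, eval_pow, eval_X]
  ring

lemma polyOf_deriv_eval (φ : (Fin (d + 1) → F) →ₗ[F] F) (t : F) :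
    (derivative (polyOf φ)).eval t = φ (fun i => ((i : ℕ) : F) * t ^ ((i : ℕ) - 1)) := by
  rw [apply_eq_sum, polyOf, derivative_sum]
  rw [Finset.sum_congr rfl fun (i : Fin (d + 1)) _ => derivative_C_mul_X_pow (φ (Pi.single i 1)) (i : ℕ)]
  rw [eval_finset_sum]
  refine Finset.sum_congr rfl fun i _ => ?_
  rw [eval_mul, eval_C, eval_pow, eval_X]
  ring

end PolyOfAux

lemma exists_dual_pair {F V : Type*} [Field F] [AddCommGroup V] [Module F V]
    [FiniteDimensional F V] (H : Submodule F V)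
    (hfin : Module.finrank F H + 2 = Module.finrank F V) :
    ∃ u w : Module.Dual F V,
      (∀ a b : F, a • u + b • w = 0 → a = 0 ∧ b = 0) ∧
      H = LinearMap.ker u ⊓ LinearMap.ker w := by
  classical
  have hfinA : Module.finrank F H.dualAnnihilator = 2 := by
    have h1 := Submodule.finrank_quotient_add_finrank H
    have h2 : Module.finrank F (V ⧸ H) = Module.finrank F H.dualAnnihilator :=
      (Subspace.quotEquivAnnihilator H).finrank_eq
    omega
  haveI : Module.Free F H.dualAnnihilator := Module.Free.of_divisionRing F H.dualAnnihilator
  obtain ⟨b⟩ : Nonempty (Module.Basis (Fin 2) F H.dualAnnihilator) :=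
    ⟨Module.finBasisOfFinrankEq F H.dualAnnihilator hfinA⟩
  refine ⟨(b 0).val, (b 1).val, ?_, ?_⟩
  · intro a c h
    have h0 : a • (b 0) + c • (b 1) = 0 := by
      apply Subtype.ext
      simpa using h
    have h1 := congrArg b.repr h0
    rw [map_add, map_smul, map_smul, b.repr_self, b.repr_self, map_zero] at h1
    constructor
    · have := congrArg (fun f => f 0) h1
      simpa using this
    · have := congrArg (fun f => f 1) h1
      simpa using this
  · have h1 : Submodule.span F (Set.range b) = (⊤ : Submodule F H.dualAnnihilator) := b.span_eq
    have hAspan : H.dualAnnihilator = Submodule.span F {(b 0).val, (b 1).val} := by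
      have h2 : H.dualAnnihilator = Submodule.map H.dualAnnihilator.subtype ⊤ := by
        rw [Submodule.map_top, Submodule.range_subtype]
      have h3 : Submodule.map H.dualAnnihilator.subtype ⊤
          = Submodule.span F {(b 0).val, (b 1).val} := by
        rw [← h1, Submodule.map_span]
        congr 1
        ext φ
        constructor
        · rintro ⟨ψ, ⟨i, rfl⟩, rfl⟩
          fin_cases i
          · exact Set.mem_insert _ _
          · exact Set.mem_insert_of_mem _ rfl
        · rintro (rfl | rfl)
          · exact ⟨b 0, ⟨0, rfl⟩, rfl⟩
          · exact ⟨b 1, ⟨1, rfl⟩, rfl⟩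
      exact h2.trans h3
    have hmem : ∀ x, x ∈ H ↔ ∀ φ ∈ H.dualAnnihilator, φ x = 0 := by
      intro x
      constructor
      · intro hx φ hφ
        exact (Submodule.mem_dualAnnihilator φ).mp hφ x hx
      · intro hx
        have h4 : x ∈ H.dualAnnihilator.dualCoannihilator :=
          (Submodule.mem_dualCoannihilator x).mpr hx
        rwa [Subspace.dualAnnihilator_dualCoannihilator_eq] at h4
    ext x
    rw [hmem x]
    constructor
    · intro hx
      refine Submodule.mem_inf.mpr ⟨?_, ?_⟩ <;> rw [LinearMap.mem_ker]
      · exact hx _ (b 0).2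
      · exact hx _ (b 1).2
    · intro hx φ hφ
      obtain ⟨hxu, hxw⟩ := Submodule.mem_inf.mp hx
      rw [LinearMap.mem_ker] at hxu hxw
      obtain ⟨a, c, rfl⟩ := Submodule.mem_span_pair.mp (hAspan.le hφ)
      simp [LinearMap.add_apply, LinearMap.smul_apply, hxu, hxw]

/-- The tangent line of the moment curve `t ↦ (1, t, …, t^d)` at parameter `t`. -/
def momentTangent (F : Type*) [Field F] (d : ℕ) (t : F) :
    Submodule F (Fin (d + 1) → F) :=
  Submodule.span F
    {fun i : Fin (d + 1) => t ^ (i : ℕ), fun i : Fin (d + 1) => ((i : ℕ) : F) * t ^ ((i : ℕ) - 1)}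

/-- If `char F = d` is prime (and `|F| ≥ 2d - 1`), then exactly one codimension-two
subspace of `PG(d,F)` meets every tangent line of the moment curve, namely the
intersection of the hyperplanes `[1,0,…,0]` and `[0,…,0,1]` (i.e. `z₀ = 0 = z_d`);
its Plücker coordinates are all zero except `H_{0,d}`. -/
theorem unique_transversal_char_d (F : Type*) [Field F] (d : ℕ)
    (hd : d.Prime) (hchar : CharP F d)
    (hF : ((2 * d - 1 : ℕ) : Cardinal) ≤ Cardinal.mk F) :
    (Module.finrank F
        (LinearMap.ker (LinearMap.proj (0 : Fin (d + 1)) :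
            (Fin (d + 1) → F) →ₗ[F] F) ⊓
          LinearMap.ker (LinearMap.proj (Fin.last d) :
            (Fin (d + 1) → F) →ₗ[F] F) : Submodule F (Fin (d + 1) → F)) = d - 1 ∧
      (∀ t : F, momentTangent F d t ⊓
        (LinearMap.ker (LinearMap.proj (0 : Fin (d + 1)) : (Fin (d + 1) → F) →ₗ[F] F) ⊓
          LinearMap.ker (LinearMap.proj (Fin.last d) : (Fin (d + 1) → F) →ₗ[F] F)) ≠ ⊥)) ∧
    ∀ H : Submodule F (Fin (d + 1) → F),
      Module.finrank F H = d - 1 → (∀ t : F, momentTangent F d t ⊓ H ≠ ⊥) →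
        H = LinearMap.ker (LinearMap.proj (0 : Fin (d + 1)) : (Fin (d + 1) → F) →ₗ[F] F) ⊓
            LinearMap.ker (LinearMap.proj (Fin.last d) : (Fin (d + 1) → F) →ₗ[F] F) := by
  classical
  have hd2 := hd.two_le
  set pr0 : (Fin (d + 1) → F) →ₗ[F] F := LinearMap.proj (0 : Fin (d + 1)) with hpr0
  set prd : (Fin (d + 1) → F) →ₗ[F] F := LinearMap.proj (Fin.last d) with hprd
  set H₀ : Submodule F (Fin (d + 1) → F) := LinearMap.ker pr0 ⊓ LinearMap.ker prd with hH₀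
  have hlast0 : (Fin.last d) ≠ (0 : Fin (d + 1)) := by
    intro h
    have := congrArg Fin.val h
    simp [Fin.last] at this
    omega
  -- rank of H₀
  have hrank0 : Module.finrank F H₀ = d - 1 := by
    set L : (Fin (d + 1) → F) →ₗ[F] F × F := LinearMap.prod pr0 prd with hL
    have hker : LinearMap.ker L = H₀ := LinearMap.ker_prod pr0 prd
    have hsurj : Function.Surjective L := by
      rintro ⟨a, b⟩
      refine ⟨a • (Pi.single (0 : Fin (d + 1)) 1 : Fin (d + 1) → F)
        + b • (Pi.single (Fin.last d) 1 : Fin (d + 1) → F), ?_⟩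
      have h1 : pr0 (a • (Pi.single (0 : Fin (d + 1)) 1 : Fin (d + 1) → F)
          + b • (Pi.single (Fin.last d) 1 : Fin (d + 1) → F)) = a := by
        simp [hpr0, Pi.single_apply, hlast0]
      have h2 : prd (a • (Pi.single (0 : Fin (d + 1)) 1 : Fin (d + 1) → F)
          + b • (Pi.single (Fin.last d) 1 : Fin (d + 1) → F)) = b := by
        simp [hprd, Pi.single_apply, hlast0]
      simp [hL, LinearMap.prod_apply, h1, h2, Prod.ext_iff]
    have hr := LinearMap.finrank_range_add_finrank_ker L
    rw [LinearMap.range_eq_top.mpr hsurj] at hr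
    have h1 : Module.finrank F (Fin (d + 1) → F) = d + 1 := by
      simp [Module.finrank_pi]
    have h2 : Module.finrank F (⊤ : Submodule F (F × F)) = 2 := by
      rw [finrank_top]
      simp
    rw [h1, h2, hker] at hr
    omega
  refine ⟨⟨hrank0, ?_⟩, ?_⟩
  · -- H₀ meets every tangent line
    intro t
    rw [Submodule.ne_bot_iff]
    refine ⟨fun i : Fin (d + 1) => ((i : ℕ) : F) * t ^ ((i : ℕ) - 1),
      Submodule.mem_inf.mpr ⟨Submodule.subset_span (Set.mem_insert_of_mem _ rfl),
        Submodule.mem_inf.mpr ⟨?_, ?_⟩⟩, ?_⟩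
    · rw [LinearMap.mem_ker]
      simp [hpr0]
    · rw [LinearMap.mem_ker]
      have hc0 : (((Fin.last d : Fin (d + 1)) : ℕ) : F) = 0 := by
        simp only [Fin.val_last]
        exact CharP.cast_eq_zero F d
      simp [hprd, hc0]
    · intro h
      have h1 := congrFun h ⟨1, by omega⟩
      simp at h1
  · -- uniqueness
    intro H hH hmeet
    -- obtain a pair of independent functionals cutting out H
    have hfin2 : Module.finrank F H + 2 = Module.finrank F (Fin (d + 1) → F) := by
      have h3 : Module.finrank F (Fin (d + 1) → F) = d + 1 := by
        simp [Module.finrank_pi]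
      rw [h3, hH]
      omega
    obtain ⟨u, w, hpair, hHuw⟩ := exists_dual_pair H hfin2
    -- the polynomials of u and w
    set U : F[X] := polyOf u with hU
    set W : F[X] := polyOf w with hW
    have hUdeg : U.natDegree ≤ d := polyOf_natDegree u
    have hWdeg : W.natDegree ≤ d := polyOf_natDegree w
    -- the Wronskian vanishes identically
    have hQ : U * derivative W - derivative U * W = 0 := by
      apply Polynomial.eq_zero_of_forall_eval_zero_of_natDegree_lt_card
      · intro t
        obtain ⟨x, ⟨hxT, hxH⟩, hx0⟩ := Submodule.ne_bot_iff _ |>.mp (hmeet t)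
        obtain ⟨a, c, hac⟩ := Submodule.mem_span_pair.mp hxT
        rw [hHuw] at hxH
        obtain ⟨hxu0, hxw0⟩ := Submodule.mem_inf.mp hxH
        have hux : u x = 0 := LinearMap.mem_ker.mp hxu0
        have hwx : w x = 0 := LinearMap.mem_ker.mp hxw0
        have e1 : a * U.eval t + c * (derivative U).eval t = 0 := by
          rw [polyOf_eval, polyOf_deriv_eval, ← smul_eq_mul, ← smul_eq_mul,
            ← map_smul, ← map_smul, ← map_add, hac, hux]
        have e2 : a * W.eval t + c * (derivative W).eval t = 0 := by
          rw [polyOf_eval, polyOf_deriv_eval, ← smul_eq_mul, ← smul_eq_mul,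
            ← map_smul, ← map_smul, ← map_add, hac, hwx]
        have hac0 : a ≠ 0 ∨ c ≠ 0 := by
          by_contra hcon
          push_neg at hcon
          obtain ⟨rfl, rfl⟩ := hcon
          apply hx0
          rw [← hac]
          simp
        rw [eval_sub, eval_mul, eval_mul, sub_eq_zero]
        rcases hac0 with ha | hc
        · have key : a * (U.eval t * (derivative W).eval t
              - (derivative U).eval t * W.eval t) = 0 := by
            linear_combination (derivative W).eval t * e1 - (derivative U).eval t * e2
          have := (mul_eq_zero.mp key).resolve_left ha
          exact sub_eq_zero.mp this
        · have key : c * (U.eval t * (derivative W).eval t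
              - (derivative U).eval t * W.eval t) = 0 := by
            linear_combination U.eval t * e2 - W.eval t * e1
          have := (mul_eq_zero.mp key).resolve_left hc
          exact sub_eq_zero.mp this
      · -- degree bound
        have h1 : (U * derivative W).natDegree ≤ 2 * d - 2 := by
          refine le_trans (natDegree_mul_le) ?_
          have := natDegree_deriv_le_char hd hWdeg
          omega
        have h2 : (derivative U * W).natDegree ≤ 2 * d - 2 := by
          refine le_trans (natDegree_mul_le) ?_
          have := natDegree_deriv_le_char hd hUdeg
          omega
        have h3 : (U * derivative W - derivative U * W).natDegree ≤ 2 * d - 2 :=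
          le_trans (natDegree_sub_le _ _) (by omega)
        calc ((U * derivative W - derivative U * W).natDegree : Cardinal)
            < ((2 * d - 1 : ℕ) : Cardinal) := by
              exact_mod_cast (by omega : (U * derivative W - derivative U * W).natDegree
                < 2 * d - 1)
          _ ≤ Cardinal.mk F := hF
    have hwr : U * derivative W = derivative U * W := sub_eq_zero.mp hQ
    -- independence transfers to the polynomials
    have hind : ∀ a c : F, a • U = c • W → a = 0 ∧ c = 0 := by
      intro a c h
      have hfun : a • u + (-c) • w = 0 := by
        apply Module.Basis.ext (Pi.basisFun F (Fin (d + 1)))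
        intro i
        have hi := congrArg (fun Q : F[X] => Q.coeff (i : ℕ)) h
        simp only [coeff_smul, hU, hW, polyOf_coeff, smul_eq_mul] at hi
        simp [Pi.basisFun_apply, hi]
      obtain ⟨h1, h2⟩ := hpair a (-c) hfun
      exact ⟨h1, by simpa using h2⟩
    have hmid := wronskian_structure hd hUdeg hWdeg hwr hind
    -- H₀ is contained in H
    have hle : H₀ ≤ H := by
      intro z hz
      obtain ⟨hz0, hzd⟩ := Submodule.mem_inf.mp hz
      have hz0' : z 0 = 0 := LinearMap.mem_ker.mp hz0
      have hzd' : z (Fin.last d) = 0 := LinearMap.mem_ker.mp hzd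
      have hvanish : ∀ φ : Module.Dual F (Fin (d + 1) → F),
          (∀ i : ℕ, 0 < i → i < d → (polyOf φ).coeff i = 0) → φ z = 0 := by
        intro φ hφ
        rw [apply_eq_sum]
        refine Finset.sum_eq_zero fun i _ => ?_
        by_cases h0 : i = 0
        · subst h0
          rw [hz0', zero_mul]
        · by_cases hlast : i = Fin.last d
          · subst hlast
            rw [hzd', zero_mul]
          · have hi1 : 0 < (i : ℕ) := by
              rcases Nat.eq_zero_or_pos (i : ℕ) with h | h
              · exact absurd (Fin.ext h : i = 0) h0
              · exact h
            have hi2 : (i : ℕ) < d := by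
              have hle2 : (i : ℕ) ≤ d := Nat.lt_succ_iff.mp i.isLt
              rcases lt_or_eq_of_le hle2 with h | h
              · exact h
              · exact absurd (Fin.ext (by simp [Fin.last, h]) : i = Fin.last d) hlast
            rw [← polyOf_coeff φ i, hφ (i : ℕ) hi1 hi2, mul_zero]
      rw [hHuw]
      refine Submodule.mem_inf.mpr ⟨?_, ?_⟩ <;> rw [LinearMap.mem_ker]
      · exact hvanish u fun i h1 h2 => (hmid i h1 h2).1
      · exact hvanish w fun i h1 h2 => (hmid i h1 h2).2
    -- conclude by dimension count
    have : H₀ = H := Submodule.eq_of_le_of_finrank_le hle (by rw [hrank0, hH])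
    exact this.symm
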